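/- For real r with |r - 1| < 1/3 and r ≠ 2/3, 4/3, we have Λ(πr + θ(r)/2) - Λ(πr - θ(r)/2) > 0, where Λ is the Lobachevsky function and θ(r) = arccos(cos(2πr) - 1/2). At r = 2/3 the expression equals 0. -/

import Mathlib

open Real MeasureTheory intervalIntegral Set Filter

noncomputable def Lob (z : ℝ) : ℝ := -∫ x in (0 : ℝ)..z, Real.log |2 * Real.sin x|

noncomputable def theta (r : ℝ) : ℝ := Real.arccos (Real.cos (2 * π * r) - 1 / 2)

noncomputable def LL (x : ℝ) : ℝ := Real.log |2 * Real.sin x|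

lemma LL_meas : Measurable LL :=
  Real.measurable_log.comp ((Real.measurable_sin.const_mul 2).abs)

lemma intInt_neglog : IntegrableOn (fun x => Real.log (π/2) - Real.log x) (Ioc 0 (π/2)) := by
  apply integrableOn_deriv_of_nonneg (g := fun x => (1 + Real.log (π/2)) * x - x * Real.log x)
  · exact ((continuous_const.mul continuous_id).sub Real.continuous_mul_log).continuousOn
  · intro x hx
    have h := ((hasDerivAt_id x).const_mul (1 + Real.log (π/2))).sub
      (Real.hasDerivAt_mul_log hx.1.ne')
    refine h.congr_deriv ?_
    ring
  · intro x hx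
    have : Real.log x ≤ Real.log (π/2) := Real.log_le_log hx.1 hx.2.le
    linarith

lemma intInt_log_sin_half : IntervalIntegrable (fun x => Real.log (Real.sin x)) volume 0 (π/2) := by
  rw [intervalIntegrable_iff, uIoc_of_le (by positivity)]
  apply Integrable.mono' intInt_neglog
    ((show Measurable fun x => Real.log (Real.sin x) from Real.measurable_log.comp Real.measurable_sin).aestronglyMeasurable)
  rw [ae_restrict_iff' measurableSet_Ioc]
  filter_upwards with x hx
  have hs : 0 < Real.sin x := Real.sin_pos_of_pos_of_lt_pi hx.1 (lt_of_le_of_lt hx.2 (by linarith [Real.pi_pos]))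
  have h1 : 2 / π * x ≤ Real.sin x := Real.mul_le_sin hx.1.le hx.2
  have h2 : Real.log (2 / π * x) ≤ Real.log (Real.sin x) :=
    Real.log_le_log (mul_pos (by positivity) hx.1) h1
  rw [Real.log_mul (by positivity) hx.1.ne'] at h2
  have h3 : Real.log (2 / π) = - Real.log (π / 2) := by
    rw [show (2:ℝ)/π = (π/2)⁻¹ by rw [inv_div], Real.log_inv]
  rw [Real.norm_eq_abs, abs_of_nonpos (Real.log_nonpos hs.le (Real.sin_le_one x))]
  rw [h3] at h2
  linarith

lemma intInt_log_sin_second : IntervalIntegrable (fun x => Real.log (Real.sin x)) volume (π/2) π := by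
  have h := intInt_log_sin_half.comp_sub_left π
  simp only [Real.sin_pi_sub] at h
  have h2 : π - 0 = π := by ring
  have h3 : π - π/2 = π/2 := by ring
  rw [h2, h3] at h
  exact h.symm

lemma intInt_log_sin_pi : IntervalIntegrable (fun x => Real.log (Real.sin x)) volume 0 π :=
  intInt_log_sin_half.trans intInt_log_sin_second

lemma intInt_log_cos : IntervalIntegrable (fun x => Real.log (Real.cos x)) volume 0 (π/2) := by
  have h := intInt_log_sin_half.comp_sub_left (π/2)
  simp only [Real.sin_pi_div_two_sub] at h
  have h2 : π/2 - 0 = π/2 := by ring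
  rw [h2, sub_self] at h
  exact h.symm
lemma refl_second : ∫ x in (π/2 : ℝ)..π, Real.log (Real.sin x)
    = ∫ x in (0:ℝ)..(π/2), Real.log (Real.sin x) := by
  have h := integral_comp_sub_left (a := (0:ℝ)) (b := π/2)
    (fun x => Real.log (Real.sin x)) π
  simp only [Real.sin_pi_sub] at h
  rw [show π - (0:ℝ) = π by ring, show π - π/2 = π/2 by ring] at h
  exact h.symm

lemma refl_cos : ∫ x in (0:ℝ)..(π/2), Real.log (Real.cos x)
    = ∫ x in (0:ℝ)..(π/2), Real.log (Real.sin x) := by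
  have h := integral_comp_sub_left (a := (0:ℝ)) (b := π/2)
    (fun x => Real.log (Real.sin x)) (π/2)
  simp only [Real.sin_pi_div_two_sub] at h
  rw [show π/2 - (0:ℝ) = π/2 by ring, sub_self] at h
  rw [h]

lemma log_sin_pi_eq : ∫ x in (0:ℝ)..π, Real.log (Real.sin x)
    = 2 * ∫ x in (0:ℝ)..(π/2), Real.log (Real.sin x) := by
  rw [← integral_add_adjacent_intervals intInt_log_sin_half intInt_log_sin_second, refl_second]
  try ring

lemma S_val : ∫ x in (0:ℝ)..(π/2), Real.log (Real.sin x) = -(π/2) * Real.log 2 := by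
  set S := ∫ x in (0:ℝ)..(π/2), Real.log (Real.sin x) with hS
  have hdup : ∫ x in (0:ℝ)..(π/2), Real.log (Real.sin (2*x)) = S := by
    rw [integral_comp_mul_left (fun x => Real.log (Real.sin x)) two_ne_zero]
    rw [mul_zero, show (2:ℝ) * (π/2) = π by ring, log_sin_pi_eq]
    simp only [smul_eq_mul]
    try ring
  have hexp : ∫ x in (0:ℝ)..(π/2), Real.log (Real.sin (2*x))
      = ∫ x in (0:ℝ)..(π/2), (Real.log 2 + (Real.log (Real.sin x) + Real.log (Real.cos x))) := by
    apply intervalIntegral.integral_congr_ae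
    have hne : ∀ᵐ x : ℝ, x ≠ π/2 := by
      refine (ae_iff).2 ?_
      have : {x : ℝ | ¬ x ≠ π/2} = {π/2} := by ext x; simp
      rw [this]
      exact Real.volume_singleton
    filter_upwards [hne] with x hx hmem
    rw [uIoc_of_le (by positivity)] at hmem
    have hx1 : 0 < x := hmem.1
    have hx2 : x < π/2 := lt_of_le_of_ne hmem.2 hx
    have hs : 0 < Real.sin x := Real.sin_pos_of_pos_of_lt_pi hx1 (by linarith [Real.pi_pos])
    have hc : 0 < Real.cos x := Real.cos_pos_of_mem_Ioo ⟨by linarith [Real.pi_pos], hx2⟩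
    rw [Real.sin_two_mul, show (2:ℝ) * Real.sin x * Real.cos x = 2 * (Real.sin x * Real.cos x) by ring,
      Real.log_mul two_ne_zero (by positivity), Real.log_mul hs.ne' hc.ne']
  rw [hexp, integral_add intervalIntegrable_const (intInt_log_sin_half.add intInt_log_cos),
    integral_add intInt_log_sin_half intInt_log_cos, intervalIntegral.integral_const, refl_cos] at hdup
  simp only [smul_eq_mul, sub_zero] at hdup
  linarith

lemma key0 : ∫ x in (0:ℝ)..π, LL x = 0 := by
  have hcongr : ∫ x in (0:ℝ)..π, LL x
      = ∫ x in (0:ℝ)..π, (Real.log 2 + Real.log (Real.sin x)) := by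
    apply intervalIntegral.integral_congr_ae
    have hne : ∀ᵐ x : ℝ, x ≠ π := by
      refine (ae_iff).2 ?_
      have : {x : ℝ | ¬ x ≠ π} = {π} := by ext x; simp
      rw [this]
      exact Real.volume_singleton
    filter_upwards [hne] with x hx hmem
    rw [uIoc_of_le Real.pi_pos.le] at hmem
    have hs : 0 < Real.sin x := Real.sin_pos_of_pos_of_lt_pi hmem.1 (lt_of_le_of_ne hmem.2 hx)
    rw [LL, abs_of_pos (by positivity), Real.log_mul two_ne_zero hs.ne']
  rw [hcongr, integral_add intervalIntegrable_const intInt_log_sin_pi, intervalIntegral.integral_const,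
    log_sin_pi_eq, S_val]
  simp only [smul_eq_mul, sub_zero]
  ring

lemma LL_per : Function.Periodic LL π := by
  intro x
  simp only [LL, Real.sin_add_pi, mul_neg, abs_neg]

lemma LLint_pi : IntervalIntegrable LL volume 0 π := by
  rw [intervalIntegrable_iff]
  have hbase : IntegrableOn (fun x => Real.log 2 + Real.log (Real.sin x)) (Set.uIoc (0:ℝ) π) volume :=
    intervalIntegrable_iff.mp (intervalIntegrable_const.add intInt_log_sin_pi)
  apply hbase.congr_fun_ae
  rw [EventuallyEq, ae_restrict_iff' measurableSet_uIoc]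
  have hne : ∀ᵐ x : ℝ, x ≠ π := by
    refine (ae_iff).2 ?_
    have : {x : ℝ | ¬ x ≠ π} = {π} := by ext x; simp
    rw [this]
    exact Real.volume_singleton
  filter_upwards [hne] with x hx hmem
  rw [uIoc_of_le Real.pi_pos.le] at hmem
  have hs : 0 < Real.sin x := Real.sin_pos_of_pos_of_lt_pi hmem.1 (lt_of_le_of_ne hmem.2 hx)
  rw [LL, abs_of_pos (by positivity), Real.log_mul two_ne_zero hs.ne']

lemma LLint_two_pi : IntervalIntegrable LL volume 0 (2*π) := by
  apply LLint_pi.trans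
  have h := LLint_pi.comp_add_right (-π)
  have heq : (fun x => LL (x + -π)) = LL := by
    funext x
    rw [show x + -π = x - π by ring]
    exact LL_per.sub_eq x
  rw [heq, zero_sub, neg_neg, show π - -π = 2*π by ring] at h
  exact h

lemma LLint' {a b : ℝ} (ha0 : 0 ≤ a) (ha : a ≤ 2*π) (hb0 : 0 ≤ b) (hb : b ≤ 2*π) :
    IntervalIntegrable LL volume a b := by
  apply LLint_two_pi.mono_set
  apply Set.uIcc_subset_uIcc <;> rw [Set.uIcc_of_le (by positivity)] <;>
    exact ⟨by assumption, by assumption⟩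

lemma Lob_hasDeriv {z : ℝ} (h0 : 0 < z) (h2 : z < 2*π) (hs : Real.sin z ≠ 0) :
    HasDerivAt Lob (-(LL z)) z := by
  have hint : IntervalIntegrable LL volume 0 z := LLint' le_rfl (by positivity) h0.le h2.le
  have habs : |2 * Real.sin z| ≠ 0 := by simpa [abs_eq_zero] using hs
  have hinner : ContinuousAt (fun x : ℝ => |2 * Real.sin x|) z :=
    ((continuous_const.mul Real.continuous_sin).abs).continuousAt
  have hca : ContinuousAt LL z := by
    have h2 : ContinuousAt (Real.log ∘ fun x : ℝ => |2 * Real.sin x|) z :=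
      ContinuousAt.comp (Real.continuousAt_log habs) hinner
    exact h2
  have hm : StronglyMeasurableAtFilter LL (nhds z) :=
    LL_meas.stronglyMeasurable.stronglyMeasurableAtFilter
  have h := (intervalIntegral.integral_hasDerivAt_right hint hm hca).neg
  exact h

lemma Lob_sub_eq {s t : ℝ} (hs0 : 0 ≤ s) (hs2 : s ≤ 2*π) (ht0 : 0 ≤ t) (ht2 : t ≤ 2*π) :
    Lob t - Lob s = -∫ x in s..t, LL x := by
  have h := integral_interval_sub_left (f := LL) (μ := volume) (a := 0) (b := t) (c := s)
    (LLint' le_rfl (by positivity) ht0 ht2) (LLint' le_rfl (by positivity) hs0 hs2)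
  show (-∫ x in (0:ℝ)..t, LL x) - (-∫ x in (0:ℝ)..s, LL x) = -∫ x in s..t, LL x
  rw [← h]
  ring

lemma Lob_period {t : ℝ} (ht0 : 0 ≤ t) (ht2 : t + π ≤ 2*π) :
    Lob (t + π) - Lob t = 0 := by
  rw [Lob_sub_eq ht0 (by linarith [Real.pi_pos]) (by linarith [Real.pi_pos]) ht2,
    LL_per.intervalIntegral_add_eq t 0, zero_add, key0, neg_zero]
lemma cos_2pi3 : Real.cos (2*π/3) = -(1/2) := by
  rw [show 2*π/3 = π - π/3 by ring, Real.cos_pi_sub, Real.cos_pi_div_three]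

lemma cos_ge {r : ℝ} (h1 : 2/3 ≤ r) (h2 : r ≤ 4/3) : -(1/2) ≤ Real.cos (2*π*r) := by
  have hπ := Real.pi_pos
  have hy : Real.cos (2*π*r) = Real.cos (2*π*r - 2*π) := (Real.cos_sub_two_pi _).symm
  have habs : |2*π*r - 2*π| ≤ 2*π/3 := by
    rw [abs_le]; constructor <;> nlinarith
  have := Real.cos_le_cos_of_nonneg_of_le_pi (abs_nonneg (2*π*r - 2*π))
    (by linarith : 2*π/3 ≤ π) habs
  rw [Real.cos_abs] at this
  rw [hy]
  linarith [cos_2pi3 ▸ this]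

lemma cos_gt {r : ℝ} (h1 : 2/3 < r) (h2 : r < 4/3) : -(1/2) < Real.cos (2*π*r) := by
  have hπ := Real.pi_pos
  have hy : Real.cos (2*π*r) = Real.cos (2*π*r - 2*π) := (Real.cos_sub_two_pi _).symm
  have habs : |2*π*r - 2*π| < 2*π/3 := by
    rw [abs_lt]; constructor <;> nlinarith
  have := Real.cos_lt_cos_of_nonneg_of_le_pi (abs_nonneg (2*π*r - 2*π))
    (by linarith : 2*π/3 ≤ π) habs
  rw [Real.cos_abs] at this
  rw [hy]
  linarith [cos_2pi3 ▸ this]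

lemma cos_lt_one' {r : ℝ} (hne : r ≠ 1) (h1 : 2/3 ≤ r) (h2 : r ≤ 4/3) :
    Real.cos (2*π*r) < 1 := by
  have hπ := Real.pi_pos
  have hy : Real.cos (2*π*r) = Real.cos (2*π*r - 2*π) := (Real.cos_sub_two_pi _).symm
  have h0 : 0 < |2*π*r - 2*π| := by
    rw [abs_pos]
    intro h
    apply hne
    nlinarith
  have habs : |2*π*r - 2*π| ≤ π := by
    rw [abs_le]; constructor <;> nlinarith
  have := Real.cos_lt_cos_of_nonneg_of_le_pi (le_refl (0:ℝ)) habs h0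
  rw [Real.cos_abs, Real.cos_zero] at this
  rw [hy]
  linarith

lemma cos_theta {r : ℝ} (h1 : 2/3 ≤ r) (h2 : r ≤ 4/3) :
    Real.cos (theta r) = Real.cos (2*π*r) - 1/2 := by
  have h := Real.cos_arccos (x := Real.cos (2*π*r) - 1/2)
    (by linarith [cos_ge h1 h2]) (by linarith [Real.cos_le_one (2*π*r)])
  exact h

lemma theta_nonneg (r : ℝ) : 0 ≤ theta r := by
  have h : (0:ℝ) ≤ Real.arccos (Real.cos (2 * π * r) - 1 / 2) := Real.arccos_nonneg _
  exact h

lemma theta_le_pi (r : ℝ) : theta r ≤ π := by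
  have h : Real.arccos (Real.cos (2 * π * r) - 1 / 2) ≤ π := Real.arccos_le_pi _
  exact h

lemma theta_mem {r : ℝ} (h1 : 2/3 ≤ r) (h2 : r ≤ 4/3) :
    π/3 ≤ theta r ∧ theta r ≤ π := by
  have hπ := Real.pi_pos
  refine ⟨?_, theta_le_pi r⟩
  have hcos := cos_theta h1 h2
  by_contra h
  push_neg at h
  have hlt := Real.cos_lt_cos_of_nonneg_of_le_pi (theta_nonneg r) (by linarith : π/3 ≤ π) h
  rw [Real.cos_pi_div_three, hcos] at hlt
  have h2' := Real.cos_le_one (2*π*r)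
  linarith

lemma theta_gt {r : ℝ} (h1 : 2/3 ≤ r) (h2 : r ≤ 4/3) (h3 : Real.cos (2*π*r) < 1) :
    π/3 < theta r := by
  have hπ := Real.pi_pos
  have hcos := cos_theta h1 h2
  by_contra h
  push_neg at h
  have hle := Real.cos_le_cos_of_nonneg_of_le_pi (theta_nonneg r) (by linarith : π/3 ≤ π) h
  rw [Real.cos_pi_div_three, hcos] at hle
  linarith

lemma theta_lt_pi {r : ℝ} (h1 : 2/3 ≤ r) (h2 : r ≤ 4/3) (h3 : -(1/2) < Real.cos (2*π*r)) :
    theta r < π := by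
  have hcos := cos_theta h1 h2
  refine lt_of_le_of_ne (theta_le_pi r) ?_
  intro h
  rw [h, Real.cos_pi] at hcos
  linarith

lemma prodId {r : ℝ} (h1 : 2/3 ≤ r) (h2 : r ≤ 4/3) :
    Real.sin (π*r + theta r/2) * Real.sin (π*r - theta r/2) = -(1/4) := by
  have hcos := cos_theta h1 h2
  have h := Real.cos_sub_cos (theta r) (2*π*r)
  rw [show (theta r + 2*π*r)/2 = π*r + theta r/2 by ring,
    show (theta r - 2*π*r)/2 = -(π*r - theta r/2) by ring, Real.sin_neg, hcos] at h
  nlinarith [h]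

lemma sinA_ne {r : ℝ} (h1 : 2/3 ≤ r) (h2 : r ≤ 4/3) :
    Real.sin (π*r + theta r/2) ≠ 0 := by
  intro h0
  have := prodId h1 h2
  rw [h0] at this
  norm_num at this

lemma sinB_ne {r : ℝ} (h1 : 2/3 ≤ r) (h2 : r ≤ 4/3) :
    Real.sin (π*r - theta r/2) ≠ 0 := by
  intro h0
  have := prodId h1 h2
  rw [h0] at this
  norm_num at this

lemma Lsum {r : ℝ} (h1 : 2/3 ≤ r) (h2 : r ≤ 4/3) :
    LL (π*r + theta r/2) + LL (π*r - theta r/2) = 0 := by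
  have hprod := prodId h1 h2
  have h4 : (2*Real.sin (π*r + theta r/2)) * (2*Real.sin (π*r - theta r/2)) = -1 := by
    linear_combination 4 * hprod
  have hA := sinA_ne h1 h2
  have hB := sinB_ne h1 h2
  rw [LL, LL, ← Real.log_mul (abs_ne_zero.2 (by simpa using hA)) (abs_ne_zero.2 (by simpa using hB)),
    ← abs_mul, h4]
  simp

lemma half_lt_sin {u : ℝ} (h1 : π/6 < u) (h2 : u < 5*π/6) : 1/2 < Real.sin u := by
  have hπ := Real.pi_pos
  rcases le_total u (π/2) with h | h
  · have hm := Real.strictMonoOn_sin (Set.mem_Icc.mpr ⟨by linarith, by linarith⟩)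
      (Set.mem_Icc.mpr ⟨by linarith, h⟩) h1
    rw [Real.sin_pi_div_six] at hm
    exact hm
  · have h1' : π/6 < π - u := by linarith
    have hm := Real.strictMonoOn_sin (Set.mem_Icc.mpr ⟨by linarith, by linarith⟩)
      (Set.mem_Icc.mpr ⟨by linarith, by linarith⟩) h1'
    rw [Real.sin_pi_div_six, Real.sin_pi_sub] at hm
    exact hm

lemma A_bounds {r : ℝ} (h1 : 2/3 ≤ r) (h2 : r ≤ 4/3) :
    0 < π*r + theta r/2 ∧ π*r + theta r/2 < 2*π := by
  have hπ := Real.pi_pos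
  obtain ⟨ht1, ht2⟩ := theta_mem h1 h2
  constructor <;> nlinarith

lemma B_bounds {r : ℝ} (h1 : 2/3 ≤ r) (h2 : r ≤ 4/3) :
    0 < π*r - theta r/2 ∧ π*r - theta r/2 < 2*π := by
  have hπ := Real.pi_pos
  obtain ⟨ht1, ht2⟩ := theta_mem h1 h2
  constructor <;> nlinarith

lemma theta_cont : Continuous theta :=
  Real.continuous_arccos.comp
    ((Real.continuous_cos.comp (continuous_const.mul continuous_id)).sub continuous_const)

lemma Vcont {s : ℝ} (h1 : 2/3 ≤ s) (h2 : s ≤ 4/3) :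
    ContinuousAt (fun s : ℝ => Lob (π*s + theta s/2) - Lob (π*s - theta s/2)) s := by
  obtain ⟨hA0, hA2⟩ := A_bounds h1 h2
  obtain ⟨hB0, hB2⟩ := B_bounds h1 h2
  have hAc : ContinuousAt (fun s : ℝ => π*s + theta s/2) s :=
    ((continuous_const.mul continuous_id).add (theta_cont.div_const 2)).continuousAt
  have hBc : ContinuousAt (fun s : ℝ => π*s - theta s/2) s :=
    ((continuous_const.mul continuous_id).sub (theta_cont.div_const 2)).continuousAt
  have hLA : ContinuousAt Lob (π*s + theta s/2) :=
    (Lob_hasDeriv hA0 hA2 (sinA_ne h1 h2)).continuousAt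
  have hLB : ContinuousAt Lob (π*s - theta s/2) :=
    (Lob_hasDeriv hB0 hB2 (sinB_ne h1 h2)).continuousAt
  have hc1 : ContinuousAt (Lob ∘ fun s : ℝ => π*s + theta s/2) s := ContinuousAt.comp hLA hAc
  have hc2 : ContinuousAt (Lob ∘ fun s : ℝ => π*s - theta s/2) s := ContinuousAt.comp hLB hBc
  exact hc1.sub hc2

lemma hasDerivV {r : ℝ} (h1 : 2/3 < r) (h2 : r < 4/3) :
    HasDerivAt (fun s : ℝ => Lob (π*s + theta s/2) - Lob (π*s - theta s/2))
      (2*π * LL (π*r - theta r/2)) r := by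
  have hπ := Real.pi_pos
  have hcgt := cos_gt h1 h2
  have hcle := Real.cos_le_one (2*π*r)
  have hne1 : Real.cos (2*π*r) - 1/2 ≠ -1 := by intro h; linarith [hcgt, h]
  have hne2 : Real.cos (2*π*r) - 1/2 ≠ 1 := by intro h; linarith
  have hinner : HasDerivAt (fun s : ℝ => Real.cos (2*π*s) - 1/2)
      (-Real.sin (2*π*r) * (2*π)) r := by
    have h0 : HasDerivAt (fun s : ℝ => 2*π*s) (2*π) r := by
      simpa using (hasDerivAt_id r).const_mul (2*π)
    have h := (Real.hasDerivAt_cos (2*π*r)).comp r h0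
    exact h.sub_const (1/2)
  have hθ : HasDerivAt theta
      (-(1 / Real.sqrt (1 - (Real.cos (2*π*r) - 1/2)^2)) * (-Real.sin (2*π*r) * (2*π))) r := by
    have h := (Real.hasDerivAt_arccos hne1 hne2).comp r hinner
    exact h
  obtain ⟨hA0, hA2⟩ := A_bounds h1.le h2.le
  obtain ⟨hB0, hB2⟩ := B_bounds h1.le h2.le
  have hLA : HasDerivAt Lob (-(LL (π*r + theta r/2))) (π*r + theta r/2) :=
    Lob_hasDeriv hA0 hA2 (sinA_ne h1.le h2.le)
  have hLB : HasDerivAt Lob (-(LL (π*r - theta r/2))) (π*r - theta r/2) :=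
    Lob_hasDeriv hB0 hB2 (sinB_ne h1.le h2.le)
  have hid : HasDerivAt (fun s : ℝ => π*s) π r := by
    simpa using (hasDerivAt_id r).const_mul π
  have hA' : HasDerivAt (fun s : ℝ => π*s + theta s/2)
      (π + (-(1 / Real.sqrt (1 - (Real.cos (2*π*r) - 1/2)^2)) * (-Real.sin (2*π*r) * (2*π)))/2) r :=
    hid.add (hθ.div_const 2)
  have hB' : HasDerivAt (fun s : ℝ => π*s - theta s/2)
      (π - (-(1 / Real.sqrt (1 - (Real.cos (2*π*r) - 1/2)^2)) * (-Real.sin (2*π*r) * (2*π)))/2) r :=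
    hid.sub (hθ.div_const 2)
  have hcompA := hLA.comp r hA'
  have hcompB := hLB.comp r hB'
  have hsum := hcompA.sub hcompB
  have hKey : LL (π*r + theta r/2) = - LL (π*r - theta r/2) := by
    linarith [Lsum h1.le h2.le]
  refine hsum.congr_deriv ?_
  rw [hKey]
  ring
lemma LLB_pos {r : ℝ} (h1 : 2/3 < r) (h2 : r < 1) : 0 < LL (π*r - theta r/2) := by
  have hπ := Real.pi_pos
  have ht1 := (theta_mem h1.le (by linarith)).1
  have ht2 := theta_lt_pi h1.le (by linarith) (cos_gt h1 (by linarith))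
  have hB1 : π/6 < π*r - theta r/2 := by nlinarith
  have hB2 : π*r - theta r/2 < 5*π/6 := by nlinarith
  have hs := half_lt_sin hB1 hB2
  rw [LL, abs_of_pos (by linarith : (0:ℝ) < 2 * Real.sin (π*r - theta r/2))]
  exact Real.log_pos (by linarith)

lemma LLB_neg {r : ℝ} (h1 : 1 < r) (h2 : r < 4/3) : LL (π*r - theta r/2) < 0 := by
  have hπ := Real.pi_pos
  have ht1 := theta_gt (by linarith) h2.le (cos_lt_one' (by linarith) (by linarith) h2.le)
  have ht2 := theta_lt_pi (by linarith) h2.le (cos_gt (by linarith) h2)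
  have hA1 : 7*π/6 < π*r + theta r/2 := by nlinarith
  have hA2 : π*r + theta r/2 < 11*π/6 := by nlinarith
  have hsAeq : Real.sin (π*r + theta r/2) = -Real.sin (π*r + theta r/2 - π) := by
    rw [show π*r + theta r/2 = (π*r + theta r/2 - π) + π by ring, Real.sin_add_pi]
    ring
  have h5 := half_lt_sin (u := π*r + theta r/2 - π) (by linarith) (by linarith)
  have hsA : Real.sin (π*r + theta r/2) < -(1/2) := by
    rw [hsAeq]; linarith
  have hprod := prodId (by linarith : 2/3 ≤ r) h2.le
  have hsinBpos : 0 < Real.sin (π*r - theta r/2) := by nlinarith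
  have hlt : 2 * Real.sin (π*r - theta r/2) < 1 := by nlinarith
  rw [LL, abs_of_pos (by linarith : (0:ℝ) < 2 * Real.sin (π*r - theta r/2))]
  exact Real.log_neg (by linarith) hlt

lemma V23 : Lob (π * (2/3) + theta (2/3) / 2) - Lob (π * (2/3) - theta (2/3) / 2) = 0 := by
  have hπ := Real.pi_pos
  have hcos : Real.cos (2*π*(2/3 : ℝ)) = -(1/2) := by
    rw [show 2*π*(2/3 : ℝ) = π + π/3 by ring, Real.cos_add]
    simp [Real.cos_pi_div_three]
    try norm_num
  have hθ : theta (2/3) = π := by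
    rw [theta, hcos, show (-(1/2) - 1/2 : ℝ) = -1 by norm_num, Real.arccos_neg_one]
  rw [hθ, show π * (2/3) + π/2 = π/6 + π by ring, show π * (2/3) - π/2 = π/6 by ring]
  exact Lob_period (by positivity) (by linarith)

lemma V43 : Lob (π * (4/3) + theta (4/3) / 2) - Lob (π * (4/3) - theta (4/3) / 2) = 0 := by
  have hπ := Real.pi_pos
  have hcos : Real.cos (2*π*(4/3 : ℝ)) = -(1/2) := by
    rw [show 2*π*(4/3 : ℝ) = 2*π/3 + 2*π by ring, Real.cos_add_two_pi]
    exact cos_2pi3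
  have hθ : theta (4/3) = π := by
    rw [theta, hcos, show (-(1/2) - 1/2 : ℝ) = -1 by norm_num, Real.arccos_neg_one]
  rw [hθ, show π * (4/3) + π/2 = 5*π/6 + π by ring, show π * (4/3) - π/2 = 5*π/6 by ring]
  exact Lob_period (by positivity) (by linarith)

lemma Vmono : StrictMonoOn (fun s : ℝ => Lob (π*s + theta s/2) - Lob (π*s - theta s/2))
    (Icc (2/3 : ℝ) 1) := by
  apply strictMonoOn_of_deriv_pos (convex_Icc _ _)
  · intro s hs
    exact (Vcont hs.1 (by linarith [hs.2] : s ≤ 4/3)).continuousWithinAt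
  · intro s hs
    rw [interior_Icc] at hs
    rw [(hasDerivV hs.1 (by linarith [hs.2] : s < 4/3)).deriv]
    have := LLB_pos hs.1 hs.2
    have hπ := Real.pi_pos
    positivity

lemma Vanti : StrictAntiOn (fun s : ℝ => Lob (π*s + theta s/2) - Lob (π*s - theta s/2))
    (Icc (1 : ℝ) (4/3)) := by
  apply strictAntiOn_of_deriv_neg (convex_Icc _ _)
  · intro s hs
    exact (Vcont (by linarith [hs.1] : 2/3 ≤ s) hs.2).continuousWithinAt
  · intro s hs
    rw [interior_Icc] at hs
    rw [(hasDerivV (by linarith [hs.1] : 2/3 < s) hs.2).deriv]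
    have := LLB_neg hs.1 hs.2
    have hπ := Real.pi_pos
    nlinarith

theorem stmt6 :
    (∀ r : ℝ, |r - 1| < 1 / 3 → r ≠ 2 / 3 → r ≠ 4 / 3 →
      Lob (π * r + theta r / 2) - Lob (π * r - theta r / 2) > 0) ∧
    Lob (π * (2 / 3) + theta (2 / 3) / 2) - Lob (π * (2 / 3) - theta (2 / 3) / 2) = 0 := by
  constructor
  · intro r hr _ _
    obtain ⟨ha, hb⟩ := abs_lt.mp hr
    have h23 : 2/3 < r := by linarith
    have h43 : r < 4/3 := by linarith
    rcases le_or_gt r 1 with hle | hlt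
    · have h := Vmono (Set.mem_Icc.mpr ⟨le_rfl, by norm_num⟩)
        (Set.mem_Icc.mpr ⟨h23.le, hle⟩) h23
      simp only at h
      have h0 : Lob (π * (2/3) + theta (2/3) / 2) - Lob (π * (2/3) - theta (2/3) / 2) = 0 := V23
      linarith [h, h0]
    · have h := Vanti (Set.mem_Icc.mpr ⟨hlt.le, h43.le⟩)
        (Set.mem_Icc.mpr ⟨by norm_num, le_rfl⟩) h43
      simp only at h
      have h0 : Lob (π * (4/3) + theta (4/3) / 2) - Lob (π * (4/3) - theta (4/3) / 2) = 0 := V43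
      linarith [h, h0]
  · exact V23
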